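/- Let κ > 0 and C > 0 be reals, and let (g_j)_{j≥1} be a summable sequence of nonnegative reals such that for every integer N ≥ 1, ∑_{j=N}^∞ g_j ≤ C·N^{−κ}. Then for every α with 1/(2(1+κ)) < α ≤ 1/2, the sequence (g_j^{2α})_{j≥1} is summable and ∑_{j=1}^∞ g_j^{2α} ≤ 2^{1−2α}·C^{2α} / (1 − 2^{1−2α(1+κ)}). -/

import Mathlib

/-- Jensen/concavity: for `0 < p ≤ 1`, `∑ f i ^ p ≤ card ^ (1-p) * (∑ f i) ^ p`. -/
lemma sum_rpow_le_card_rpow_mul (s : Finset ℕ) (f : ℕ → ℝ) (hf : ∀ i ∈ s, 0 ≤ f i)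
    {p : ℝ} (hp0 : 0 < p) (hp1 : p ≤ 1) :
    ∑ i ∈ s, f i ^ p ≤ (s.card : ℝ) ^ (1 - p) * (∑ i ∈ s, f i) ^ p := by
  have hq : (1 : ℝ) ≤ 1 / p := by
    rw [le_div_iff₀ hp0]; linarith
  have hsum_nonneg : 0 ≤ ∑ i ∈ s, f i ^ p :=
    Finset.sum_nonneg fun i hi => Real.rpow_nonneg (hf i hi) p
  have hsum_nonneg' : 0 ≤ ∑ i ∈ s, f i := Finset.sum_nonneg hf
  have key := Real.rpow_sum_le_const_mul_sum_rpow_of_nonneg s hq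
    (f := fun i => f i ^ p) (fun i hi => Real.rpow_nonneg (hf i hi) p)
  have hsimp : ∀ i ∈ s, (f i ^ p) ^ (1 / p) = f i := by
    intro i hi
    rw [one_div, Real.rpow_rpow_inv (hf i hi) hp0.ne']
  rw [Finset.sum_congr rfl hsimp] at key
  have key2 := Real.rpow_le_rpow (Real.rpow_nonneg hsum_nonneg _) key hp0.le
  rw [one_div, Real.rpow_inv_rpow hsum_nonneg hp0.ne'] at key2
  refine key2.trans_eq ?_
  rw [Real.mul_rpow (Real.rpow_nonneg (Nat.cast_nonneg _) _) hsum_nonneg',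
    ← Real.rpow_mul (Nat.cast_nonneg _)]
  congr 2
  field_simp

/-- **Computational core of Lemma 6 (α-SE strength under power-law tails).** If the
nonnegative summable sequence `(g_j)_{j≥1}` satisfies `∑_{j≥N} g_j ≤ C·N^{−κ}` for all
`N ≥ 1`, then for every `α` with `1/(2(1+κ)) < α ≤ 1/2` the sequence `(g_j^{2α})_{j≥1}`
is summable and `∑_{j≥1} g_j^{2α} ≤ 2^{1−2α}·C^{2α}/(1 − 2^{1−2α(1+κ)})`.
Here `g j` denotes `g_j` (with `g 0` irrelevant) and powers are real powers. -/
theorem stmt_11 (κ C : ℝ) (hκ : 0 < κ) (hC : 0 < C) (g : ℕ → ℝ)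
    (hg_nonneg : ∀ j, 1 ≤ j → 0 ≤ g j)
    (hg_sum : Summable fun j : ℕ => g (j + 1))
    (htail : ∀ N : ℕ, 1 ≤ N → ∑' k : ℕ, g (k + N) ≤ C * (N : ℝ) ^ (-κ)) :
    ∀ α : ℝ, 1 / (2 * (1 + κ)) < α → α ≤ 1/2 →
      Summable (fun j : ℕ => g (j + 1) ^ (2 * α)) ∧
      ∑' j : ℕ, g (j + 1) ^ (2 * α)
        ≤ (2 : ℝ) ^ (1 - 2 * α) * C ^ (2 * α) / (1 - (2 : ℝ) ^ (1 - 2 * α * (1 + κ))) := by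
  intro α hα1 hα2
  have hκ1 : (0:ℝ) < 1 + κ := by linarith
  set p : ℝ := 2 * α with hp
  have hp0 : 0 < p := by
    have : (0:ℝ) < 1 / (2 * (1 + κ)) := by positivity
    have : (0:ℝ) < α := lt_trans this hα1
    simp only [hp]; linarith
  have hp1 : p ≤ 1 := by simp only [hp]; linarith
  have hpκ : 1 < p * (1 + κ) := by
    have h := (div_lt_iff₀ (by positivity : (0:ℝ) < 2 * (1 + κ))).mp hα1
    simp only [hp]; nlinarith
  set r : ℝ := (2 : ℝ) ^ (1 - p * (1 + κ)) with hr
  have hr0 : 0 < r := Real.rpow_pos_of_pos two_pos _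
  have hr1 : r < 1 :=
    Real.rpow_lt_one_of_one_lt_of_neg one_lt_two (by linarith)
  -- summability of shifted sequences
  have hshift : ∀ N : ℕ, 1 ≤ N → Summable (fun k : ℕ => g (k + N)) := by
    intro N hN
    have := (summable_nat_add_iff (f := fun j : ℕ => g (j + 1)) (N - 1)).mpr hg_sum
    have hNN : N - 1 + 1 = N := Nat.succ_pred_eq_of_pos hN
    simpa [add_assoc, hNN] using this
  -- tail bound on dyadic blocks
  have hblocksum : ∀ n : ℕ, ∑ j ∈ Finset.Ico (2^n) (2^(n+1)), g j
      ≤ C * ((2:ℝ)^n) ^ (-κ) := by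
    intro n
    have hN : 1 ≤ 2^n := Nat.one_le_two_pow
    have h1 : ∑ j ∈ Finset.Ico (2^n) (2^(n+1)), g j
        = ∑ k ∈ Finset.range (2^n), g (k + 2^n) := by
      rw [Finset.sum_Ico_eq_sum_range]
      have : 2^(n+1) - 2^n = 2^n := by rw [pow_succ]; omega
      rw [this]
      exact Finset.sum_congr rfl fun k _ => by rw [add_comm]
    rw [h1]
    calc ∑ k ∈ Finset.range (2^n), g (k + 2^n)
        ≤ ∑' k : ℕ, g (k + 2^n) :=
          Summable.sum_le_tsum _ (fun k _ => hg_nonneg _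
            (Nat.one_le_two_pow.trans (Nat.le_add_left _ _))) (hshift _ hN)
      _ ≤ C * ((2^n : ℕ) : ℝ) ^ (-κ) := htail _ hN
      _ = C * ((2:ℝ)^n) ^ (-κ) := by push_cast; ring_nf
  -- block bound for the p-th powers
  have hblock : ∀ n : ℕ, ∑ j ∈ Finset.Ico (2^n) (2^(n+1)), g j ^ p ≤ C ^ p * r ^ n := by
    intro n
    have hnonneg : ∀ j ∈ Finset.Ico (2^n) (2^(n+1)), 0 ≤ g j := by
      intro j hj
      exact hg_nonneg j (le_trans Nat.one_le_two_pow (Finset.mem_Ico.mp hj).1)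
    have hcard : ((Finset.Ico (2^n) (2^(n+1))).card : ℝ) = (2:ℝ)^n := by
      rw [Nat.card_Ico]
      have : 2^(n+1) - 2^n = 2^n := by rw [pow_succ]; omega
      rw [this]; push_cast; ring
    have hsum_nonneg : 0 ≤ ∑ j ∈ Finset.Ico (2^n) (2^(n+1)), g j :=
      Finset.sum_nonneg hnonneg
    calc ∑ j ∈ Finset.Ico (2^n) (2^(n+1)), g j ^ p
        ≤ ((Finset.Ico (2^n) (2^(n+1))).card : ℝ) ^ (1 - p)
            * (∑ j ∈ Finset.Ico (2^n) (2^(n+1)), g j) ^ p :=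
          sum_rpow_le_card_rpow_mul _ _ hnonneg hp0 hp1
      _ ≤ ((2:ℝ)^n) ^ (1 - p) * (C * ((2:ℝ)^n) ^ (-κ)) ^ p := by
          rw [hcard]
          exact mul_le_mul_of_nonneg_left
            (Real.rpow_le_rpow hsum_nonneg (hblocksum n) hp0.le)
            (Real.rpow_nonneg (by positivity) _)
      _ = C ^ p * r ^ n := by
          rw [Real.mul_rpow hC.le (Real.rpow_nonneg (by positivity) _),
            ← Real.rpow_natCast (2:ℝ) n, ← Real.rpow_mul two_pos.le,
            ← Real.rpow_mul two_pos.le, ← Real.rpow_mul two_pos.le, hr,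
            ← Real.rpow_natCast ((2:ℝ) ^ (1 - p * (1 + κ))) n,
            ← Real.rpow_mul two_pos.le, mul_left_comm, ← Real.rpow_add two_pos]
          congr 1
          ring_nf
  -- partial sums over `Ico 1 (2^m)`
  have hT : ∀ m : ℕ, ∑ j ∈ Finset.Ico 1 (2^m), g j ^ p
      ≤ C ^ p * ∑ n ∈ Finset.range m, r ^ n := by
    intro m
    induction m with
    | zero => simp
    | succ m ih =>
      have hle1 : (1:ℕ) ≤ 2^m := Nat.one_le_two_pow
      have hle2 : (2:ℕ)^m ≤ 2^(m+1) := Nat.pow_le_pow_right (by norm_num) (by omega)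
      rw [← Finset.sum_Ico_consecutive _ hle1 hle2, Finset.sum_range_succ, mul_add]
      exact add_le_add ih (hblock m)
  have hgeo : ∀ m : ℕ, ∑ n ∈ Finset.range m, r ^ n ≤ (1 - r)⁻¹ := by
    intro m
    calc ∑ n ∈ Finset.range m, r ^ n ≤ ∑' n : ℕ, r ^ n :=
          Summable.sum_le_tsum _ (fun n _ => pow_nonneg hr0.le n)
            (summable_geometric_of_lt_one hr0.le hr1)
      _ = (1 - r)⁻¹ := tsum_geometric_of_lt_one hr0.le hr1
  have hbound : ∀ m : ℕ, ∑ i ∈ Finset.range m, g (i + 1) ^ p ≤ C ^ p * (1 - r)⁻¹ := by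
    intro m
    have h1 : ∑ i ∈ Finset.range m, g (i + 1) ^ p = ∑ j ∈ Finset.Ico 1 (m+1), g j ^ p := by
      rw [Finset.sum_Ico_eq_sum_range]
      simp only [Nat.add_sub_cancel]
      exact (Finset.sum_congr rfl fun k _ => by rw [add_comm]).symm
    have hsub : Finset.Ico 1 (m+1) ⊆ Finset.Ico 1 (2^m) := by
      apply Finset.Ico_subset_Ico le_rfl
      exact Nat.lt_two_pow_self
    calc ∑ i ∈ Finset.range m, g (i + 1) ^ p
        = ∑ j ∈ Finset.Ico 1 (m+1), g j ^ p := h1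
      _ ≤ ∑ j ∈ Finset.Ico 1 (2^m), g j ^ p :=
          Finset.sum_le_sum_of_subset_of_nonneg hsub
            (fun j hj _ => Real.rpow_nonneg (hg_nonneg j (Finset.mem_Ico.mp hj).1) p)
      _ ≤ C ^ p * ∑ n ∈ Finset.range m, r ^ n := hT m
      _ ≤ C ^ p * (1 - r)⁻¹ :=
          mul_le_mul_of_nonneg_left (hgeo m) (Real.rpow_nonneg hC.le p)
  have hterm_nonneg : ∀ i : ℕ, 0 ≤ g (i + 1) ^ p :=
    fun i => Real.rpow_nonneg (hg_nonneg _ (Nat.le_add_left 1 i)) p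
  have hsummable : Summable (fun j : ℕ => g (j + 1) ^ p) :=
    summable_of_sum_range_le hterm_nonneg hbound
  refine ⟨hsummable, ?_⟩
  have htsum : ∑' j : ℕ, g (j + 1) ^ p ≤ C ^ p * (1 - r)⁻¹ :=
    Real.tsum_le_of_sum_range_le hterm_nonneg hbound
  refine htsum.trans ?_
  rw [div_eq_mul_inv]
  have h2 : (1:ℝ) ≤ (2:ℝ) ^ (1 - p) := by
    calc (1:ℝ) = (2:ℝ) ^ (0:ℝ) := (Real.rpow_zero 2).symm
      _ ≤ (2:ℝ) ^ (1 - p) := Real.rpow_le_rpow_of_exponent_le one_le_two (by linarith)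
  have : C ^ p ≤ (2:ℝ) ^ (1 - p) * C ^ p := by
    nlinarith [Real.rpow_nonneg hC.le p]
  exact mul_le_mul_of_nonneg_right this (inv_nonneg.mpr (by linarith))
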